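/- arXiv:2007.01914 — 4 statements merged into one kernel-verified Lean document; each statement's English description precedes it below -/
import Mathlib

section
/- Let F be a totally real number field, a ∈ O_F totally negative and not a square in F, and let p be an odd prime number for which there is a prime ideal 𝔭 of O_F containing p, unramified over p (the 𝔭-adic valuation of p is 1), such that the image of a in the residue field O_F/𝔭 is nonzero and not a square (so that the quaternion algebra B = (a, p / F) is a division ring ramified at 𝔭). Then there exists a positive integer d such that −d is not a square in F and no element x of B satisfies x² = −d·1_B; equivalently, there is no F-algebra embedding of the quadratic field F(√−d) into B. -/
open NumberField Quaternion IsDedekindDomain Multiplicative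

namespace QAux

abbrev ZM : Type := WithZero (Multiplicative ℤ)

lemma zm0_exists {x : ZM} (hx : x ≠ 0) : ∃ k : ℤ, x = (ofAdd k : Multiplicative ℤ) := by
  obtain ⟨a, ha⟩ := WithZero.ne_zero_iff_exists.mp hx
  exact ⟨a.toAdd, by simp [← ha]⟩

lemma zm0_sq_inj {x y : ZM} (h : x ^ 2 = y ^ 2) : x = y := by
  rcases eq_or_ne x 0 with rfl | hx
  · rcases eq_or_ne y 0 with rfl | hy
    · rfl
    · obtain ⟨k, rfl⟩ := zm0_exists hy
      simp [← WithZero.coe_pow] at h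
  · rcases eq_or_ne y 0 with rfl | hy
    · obtain ⟨k, rfl⟩ := zm0_exists hx
      simp [← WithZero.coe_pow] at h
    · obtain ⟨k, rfl⟩ := zm0_exists hx
      obtain ⟨l, rfl⟩ := zm0_exists hy
      rw [← WithZero.coe_pow, ← WithZero.coe_pow, WithZero.coe_inj] at h
      rw [WithZero.coe_inj]
      have : (2:ℤ) * k = 2 * l := by
        have := congrArg Multiplicative.toAdd h
        simpa [two_mul] using this
      have : k = l := by omega
      rw [this]

lemma zm0_lt_imp {x : ZM} {k : ℤ} (h : x < (ofAdd k : Multiplicative ℤ)) :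
    x ≤ ((ofAdd (k - 1) : Multiplicative ℤ) : ZM) := by
  rcases eq_or_ne x 0 with rfl | hx
  · exact zero_le'
  · obtain ⟨j, rfl⟩ := zm0_exists hx
    rw [WithZero.coe_lt_coe, ofAdd_lt] at h
    rw [WithZero.coe_le_coe, ofAdd_le]
    omega

lemma zm0_max_sq (x y : ZM) : max x y ^ 2 = max (x ^ 2) (y ^ 2) := by
  rcases le_total x y with h | h
  · rw [max_eq_right h, max_eq_right (pow_le_pow_left' h 2)]
  · rw [max_eq_left h, max_eq_left (pow_le_pow_left' h 2)]


variable {R : Type*} [CommRing R] [IsDedekindDomain R] (v : HeightOneSpectrum R)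

lemma mem_pow_iff (x : R) (n : ℕ) :
    x ∈ v.asIdeal ^ n ↔ v.intValuation x ≤ ((ofAdd (-(n : ℤ)) : Multiplicative ℤ) : ZM) := by
  exact (IsDedekindDomain.HeightOneSpectrum.intValuation_le_pow_iff_mem v x n).symm

lemma intVal_eq_zero_iff (x : R) : v.intValuation x = 0 ↔ x = 0 := by
  constructor
  · intro h
    by_contra hx
    exact IsDedekindDomain.HeightOneSpectrum.intValuation_ne_zero v x hx
      (by rwa [IsDedekindDomain.HeightOneSpectrum.intValuation_apply] at h)
  · rintro rfl; exact map_zero _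

lemma intVal_unit {c : R} (hc : c ∉ v.asIdeal) : v.intValuation c = 1 := by
  rcases lt_or_eq_of_le (IsDedekindDomain.HeightOneSpectrum.intValuation_le_one v c) with h | h
  · exfalso
    apply hc
    have := (IsDedekindDomain.HeightOneSpectrum.intValuation_lt_one_iff_dvd v c).mp h
    rwa [Ideal.dvd_span_singleton] at this
  · exact h

lemma key_val {c : R} (hc : ∀ t : R, c - t ^ 2 ∉ v.asIdeal) (U W : R) :
    v.intValuation (U ^ 2 - c * W ^ 2)
      = max (v.intValuation U) (v.intValuation W) ^ 2 := by
  have hc0 : c ∉ v.asIdeal := by simpa using hc 0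
  have hc1 : v.intValuation c = 1 := intVal_unit v hc0
  have hU2 : v.intValuation (U ^ 2) = v.intValuation U ^ 2 := map_pow _ _ _
  have hcW2 : v.intValuation (c * W ^ 2) = v.intValuation W ^ 2 := by
    rw [map_mul, hc1, one_mul, map_pow]
  by_cases hUW : v.intValuation U = v.intValuation W
  · rcases eq_or_ne (v.intValuation U) 0 with h0 | h0
    · -- both zero
      have hU : U = 0 := (intVal_eq_zero_iff v U).mp h0
      have hW : W = 0 := (intVal_eq_zero_iff v W).mp (hUW ▸ h0)
      simp [hU, hW, h0]
    · obtain ⟨k, hk⟩ := zm0_exists h0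
      have hkle : k ≤ 0 := by
        have : v.intValuation U ≤ 1 :=
          IsDedekindDomain.HeightOneSpectrum.intValuation_le_one v U
        rw [hk] at this
        rwa [← WithZero.coe_one, WithZero.coe_le_coe, ← ofAdd_zero, ofAdd_le] at this
      set m : ℕ := (-k).toNat with hm
      have hkm : k = -(m : ℤ) := by omega
      have hUv : v.intValuation U = ((ofAdd (-(m : ℤ)) : Multiplicative ℤ) : ZM) := by
        rw [hk, hkm]
      have hWv : v.intValuation W = ((ofAdd (-(m : ℤ)) : Multiplicative ℤ) : ZM) := by
        rw [← hUW, hUv]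
      have hUm : U ∈ v.asIdeal ^ m := (mem_pow_iff v U m).mpr (le_of_eq hUv)
      have hWm : W ∈ v.asIdeal ^ m := (mem_pow_iff v W m).mpr (le_of_eq hWv)
      have hWm1 : W ∉ v.asIdeal ^ (m + 1) := by
        intro h
        have := (mem_pow_iff v W (m + 1)).mp h
        rw [hWv, WithZero.coe_le_coe, ofAdd_le] at this
        omega
      -- goal value
      have hsq : (max (v.intValuation U) (v.intValuation W)) ^ 2
          = ((ofAdd (-(2 * m : ℤ)) : Multiplicative ℤ) : ZM) := by
        rw [hUv, hWv, max_self, ← WithZero.coe_pow, WithZero.coe_inj, ← ofAdd_nsmul]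
        congr 1
        push_cast
        ring
      rw [hsq]
      have hle : v.intValuation (U ^ 2 - c * W ^ 2)
          ≤ ((ofAdd (-(2 * m : ℤ)) : Multiplicative ℤ) : ZM) := by
        refine le_trans (Valuation.map_sub _ _ _) ?_
        rw [hU2, hcW2, hUW, max_self, hWv, ← WithZero.coe_pow, WithZero.coe_le_coe,
          ← ofAdd_nsmul]
        apply le_of_eq
        congr 1
        push_cast
        ring
      rcases lt_or_eq_of_le hle with hlt | heq
      · exfalso
        have h1 : U ^ 2 - c * W ^ 2 ∈ v.asIdeal ^ (2 * m + 1) := by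
          rw [mem_pow_iff]
          have := zm0_lt_imp hlt
          convert this using 3
          push_cast
          ring
        have hprime : Prime v.asIdeal := Ideal.prime_of_isPrime v.ne_bot v.isPrime
        set I : Ideal R := Ideal.span {W} ⊔ v.asIdeal ^ (m + 1) with hI
        have hIdvd : I ∣ v.asIdeal ^ (m + 1) := Ideal.dvd_iff_le.mpr le_sup_right
        obtain ⟨i, hi, hassoc⟩ := (dvd_prime_pow hprime (m + 1)).mp hIdvd
        have hIeq : I = v.asIdeal ^ i := associated_iff_eq.mp hassoc
        have hWI : W ∈ I := Submodule.mem_sup_left (Ideal.mem_span_singleton_self W)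
        have him : i ≤ m := by
          rcases Nat.lt_or_ge i (m + 1) with h | h
          · omega
          · exfalso
            have : i = m + 1 := by omega
            rw [this] at hIeq
            exact hWm1 (hIeq ▸ hWI)
        have hUI : U ∈ I := by
          rw [hIeq]
          exact Ideal.pow_le_pow_right him hUm
        obtain ⟨t, g, hg, htg⟩ := Ideal.mem_span_singleton_sup.mp hUI
        -- (t^2 - c) * W^2 ∈ 𝔭^(2m+1)
        have hWg : W * g ∈ v.asIdeal ^ (2 * m + 1) := by
          have : v.asIdeal ^ m * v.asIdeal ^ (m + 1) = v.asIdeal ^ (2 * m + 1) := by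
            rw [← pow_add]; congr 1; ring
          rw [← this]
          exact Ideal.mul_mem_mul hWm hg
        have hgg : g * g ∈ v.asIdeal ^ (2 * m + 1) := by
          have h2 : v.asIdeal ^ (m + 1) * v.asIdeal ^ (m + 1) ≤ v.asIdeal ^ (2 * m + 1) := by
            rw [← pow_add]
            exact Ideal.pow_le_pow_right (by omega)
          exact h2 (Ideal.mul_mem_mul hg hg)
        have hmem : (t ^ 2 - c) * W ^ 2 ∈ v.asIdeal ^ (2 * m + 1) := by
          have hexp : (t ^ 2 - c) * W ^ 2
              = (U ^ 2 - c * W ^ 2) - ((2 * t) * (W * g) + g * g) := by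
            rw [← htg]; ring
          rw [hexp]
          exact sub_mem h1 (add_mem (Ideal.mul_mem_left _ _ hWg) hgg)
        have htc : t ^ 2 - c ∈ v.asIdeal := by
          have hval := (mem_pow_iff v _ (2 * m + 1)).mp hmem
          rw [map_mul, map_pow, hWv, ← WithZero.coe_pow] at hval
          rw [show v.asIdeal = v.asIdeal ^ 1 from (pow_one _).symm, mem_pow_iff]
          rcases eq_or_ne (v.intValuation (t ^ 2 - c)) 0 with hz | hz
          · rw [hz]; exact zero_le'
          · obtain ⟨j, hj⟩ := zm0_exists hz
            rw [hj] at hval ⊢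
            rw [← WithZero.coe_mul, WithZero.coe_le_coe] at hval
            have h2 : j + (2 : ℕ) • (-(m:ℤ)) ≤ -((2 * m + 1 : ℕ) : ℤ) := by
              rw [← ofAdd_nsmul, ← ofAdd_add, ofAdd_le] at hval
              exact hval
            rw [nsmul_eq_mul] at h2
            rw [WithZero.coe_le_coe, ofAdd_le]
            push_cast at h2 ⊢
            omega
        exact hc t (by simpa using neg_mem htc)
      · exact heq
  · -- distinct valuations
    have hne : v.intValuation (U ^ 2) ≠ v.intValuation (c * W ^ 2) := by
      rw [hU2, hcW2]
      intro h
      exact hUW (zm0_sq_inj h)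
    have hneg : v.intValuation (-(c * W ^ 2)) = v.intValuation (c * W ^ 2) :=
      Valuation.map_neg _ _
    have hne' : v.intValuation (U ^ 2) ≠ v.intValuation (-(c * W ^ 2)) := by
      rw [hneg]; exact hne
    have h := Valuation.map_add_of_distinct_val v.intValuation hne'
    rw [sub_eq_add_neg, h, hneg, hU2, hcW2, zm0_max_sq]
end QAux

open QAux

set_option maxHeartbeats 1000000 in
set_option synthInstance.maxHeartbeats 100000 in
/-- Let `F` be a totally real number field, `a ∈ 𝓞 F` totally negative and
not a square in `F`, and let `p` be an odd prime number admitting a prime ideal `𝔭` of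
`𝓞 F` containing `p`, unramified over `p` (the `𝔭`-adic valuation of `p` is `1`), such that
the image of `a` in the residue field `𝓞 F/𝔭` is nonzero and not a square (so that the
quaternion algebra `B = (a, p / F)` is a division ring ramified at `𝔭`). Then there exists a
positive integer `d` such that `−d` is not a square in `F` and no element `x` of `B`
satisfies `x² = −d`; equivalently, `F(√−d)` does not embed into `B` over `F`. -/
theorem exists_neg_int_not_embedding_into_quaternionAlgebra
    (F : Type*) [Field F] [NumberField F]
    (hF : ∀ φ : F →+* ℂ, ComplexEmbedding.IsReal φ)
    (a : 𝓞 F)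
    (haneg : ∀ σ : F →+* ℝ, σ (a : F) < 0)
    (hasq : ¬ ∃ y : F, y ^ 2 = (a : F))
    (p : ℕ) (hp : p.Prime) (hodd : p ≠ 2)
    (𝔭 : Ideal (𝓞 F)) (h𝔭 : 𝔭.IsPrime)
    (hp𝔭 : (p : 𝓞 F) ∈ 𝔭) (hp𝔭2 : (p : 𝓞 F) ∉ 𝔭 ^ 2)
    (ha𝔭 : Ideal.Quotient.mk 𝔭 a ≠ 0)
    (ha𝔭sq : ¬ ∃ y : 𝓞 F ⧸ 𝔭, y ^ 2 = Ideal.Quotient.mk 𝔭 a) :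
    ∃ d : ℕ, 0 < d ∧ (¬ ∃ y : F, y ^ 2 = -(d : F)) ∧
      ¬ ∃ x : ℍ[F, (a : F), (p : F)], x ^ 2 = -(d : ℍ[F, (a : F), (p : F)]) := by
  have hp3 : 3 ≤ p := by
    have := hp.two_le
    omega
  have hns : ¬ ∃ y : F, y ^ 2 = -((p - 1 : ℕ) : F) := by
    have φ : F →+* ℂ := (IsAlgClosed.lift (R := ℚ) (M := ℂ) (S := F)).toRingHom
    have σ : F →+* ℝ := (hF φ).embedding
    rintro ⟨y, hy⟩
    have := congrArg σ hy
    rw [map_pow, map_neg, map_natCast] at this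
    have h1 : (0:ℝ) ≤ σ y ^ 2 := sq_nonneg _
    have h2 : (0:ℝ) < ((p - 1 : ℕ) : ℝ) := by
      have : (1:ℕ) ≤ p - 1 := by omega
      exact_mod_cast Nat.lt_of_lt_of_le Nat.zero_lt_one this
    rw [this] at h1
    linarith
  refine ⟨p - 1, by omega, hns, ?_⟩
  · rintro ⟨x, hx⟩
    set d : ℕ := p - 1 with hd
    -- component equations
    have hre := congrArg QuaternionAlgebra.re hx
    have himI := congrArg QuaternionAlgebra.imI hx
    have himJ := congrArg QuaternionAlgebra.imJ hx
    have himK := congrArg QuaternionAlgebra.imK hx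
    rw [pow_two] at hre himI himJ himK
    simp only [QuaternionAlgebra.re_mul, QuaternionAlgebra.imI_mul, QuaternionAlgebra.imJ_mul,
      QuaternionAlgebra.imK_mul, QuaternionAlgebra.re_neg, QuaternionAlgebra.imI_neg,
      QuaternionAlgebra.imJ_neg, QuaternionAlgebra.imK_neg, QuaternionAlgebra.re_natCast,
      QuaternionAlgebra.imI_natCast, QuaternionAlgebra.imJ_natCast,
      QuaternionAlgebra.imK_natCast, neg_zero] at hre himI himJ himK
    -- pure-quaternion reduction
    have htu : x.re * x.imI = 0 := by linear_combination himI / 2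
    have htv : x.re * x.imJ = 0 := by linear_combination himJ / 2
    have htw : x.re * x.imK = 0 := by linear_combination himK / 2
    by_cases ht : x.re = 0
    · -- ternary form case
      rw [ht] at hre
      -- clear denominators
      obtain ⟨U, su, hsu, hUdiv⟩ := IsFractionRing.div_surjective (A := 𝓞 F) (K := F) x.imI
      obtain ⟨V, sv, hsv, hVdiv⟩ := IsFractionRing.div_surjective (A := 𝓞 F) (K := F) x.imJ
      obtain ⟨W, sw, hsw, hWdiv⟩ := IsFractionRing.div_surjective (A := 𝓞 F) (K := F) x.imK
      have hsu0 : su ≠ 0 := nonZeroDivisors.ne_zero hsu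
      have hsv0 : sv ≠ 0 := nonZeroDivisors.ne_zero hsv
      have hsw0 : sw ≠ 0 := nonZeroDivisors.ne_zero hsw
      have hsuF : (algebraMap (𝓞 F) F) su ≠ 0 :=
        NumberField.RingOfIntegers.coe_ne_zero_iff.mpr hsu0
      have hsvF : (algebraMap (𝓞 F) F) sv ≠ 0 :=
        NumberField.RingOfIntegers.coe_ne_zero_iff.mpr hsv0
      have hswF : (algebraMap (𝓞 F) F) sw ≠ 0 :=
        NumberField.RingOfIntegers.coe_ne_zero_iff.mpr hsw0
      have hU' : (algebraMap (𝓞 F) F) U = x.imI * (algebraMap (𝓞 F) F) su := by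
        field_simp at hUdiv; linear_combination hUdiv
      have hV' : (algebraMap (𝓞 F) F) V = x.imJ * (algebraMap (𝓞 F) F) sv := by
        field_simp at hVdiv; linear_combination hVdiv
      have hW' : (algebraMap (𝓞 F) F) W = x.imK * (algebraMap (𝓞 F) F) sw := by
        field_simp at hWdiv; linear_combination hWdiv
      set s : 𝓞 F := su * sv * sw with hsdef
      have hs0 : s ≠ 0 := by
        simp [hsdef, mul_ne_zero, hsu0, hsv0, hsw0]
      set U' : 𝓞 F := U * sv * sw with hU'def
      set V' : 𝓞 F := V * su * sw with hV'def
      set W' : 𝓞 F := W * su * sv with hW'def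
      have hEF : (algebraMap (𝓞 F) F)
          (a * U' ^ 2 + (p : 𝓞 F) * V' ^ 2 - a * (p : 𝓞 F) * W' ^ 2 + (d : 𝓞 F) * s ^ 2) = 0 := by
        simp only [hU'def, hV'def, hW'def, hsdef, map_add, map_sub, map_mul, map_pow, map_natCast]
        rw [hU', hV', hW']
        rw [show (algebraMap (𝓞 F) F) a = (a : F) from rfl]
        linear_combination ((algebraMap (𝓞 F) F) su * (algebraMap (𝓞 F) F) sv
          * (algebraMap (𝓞 F) F) sw) ^ 2 * hre
      have hE0 : a * U' ^ 2 + (p : 𝓞 F) * V' ^ 2 - a * (p : 𝓞 F) * W' ^ 2 + (d : 𝓞 F) * s ^ 2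
          = 0 := NumberField.RingOfIntegers.coe_eq_zero_iff.mp hEF
      -- valuation argument
      have hpne : (p : 𝓞 F) ≠ 0 := Nat.cast_ne_zero.mpr hp.ne_zero
      have hbot : 𝔭 ≠ ⊥ := by
        intro h
        rw [h] at hp𝔭
        exact hpne (Ideal.mem_bot.mp hp𝔭)
      set v : HeightOneSpectrum (𝓞 F) := ⟨𝔭, h𝔭, hbot⟩ with hvdef
      have hca : ∀ t : 𝓞 F, a - t ^ 2 ∉ v.asIdeal := by
        intro t htmem
        exact ha𝔭sq ⟨Ideal.Quotient.mk 𝔭 t, by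
          rw [← map_pow]; exact (Ideal.Quotient.eq.mpr htmem).symm⟩
      have hmkd : Ideal.Quotient.mk 𝔭 ((d : 𝓞 F)) = -1 := by
        have h1 : ((d : 𝓞 F)) = (p : 𝓞 F) - 1 := by
          rw [hd]
          push_cast [Nat.cast_sub (by omega : 1 ≤ p)]
          ring
        rw [h1, map_sub, Ideal.Quotient.eq_zero_iff_mem.mpr hp𝔭, map_one, zero_sub]
      have hc2 : ∀ t : 𝓞 F, -(a * (d : 𝓞 F)) - t ^ 2 ∉ v.asIdeal := by
        intro t htmem
        apply ha𝔭sq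
        refine ⟨Ideal.Quotient.mk 𝔭 t, ?_⟩
        have h2 := Ideal.Quotient.eq.mpr htmem
        rw [map_neg, map_mul, hmkd] at h2
        rw [← map_pow, ← h2]
        ring
      have hva : v.intValuation a = 1 :=
        intVal_unit v (fun h => ha𝔭 (Ideal.Quotient.eq_zero_iff_mem.mpr h))
      have hvp : v.intValuation (p : 𝓞 F) = ((ofAdd (-1 : ℤ) : Multiplicative ℤ) : ZM) := by
        have h1 : v.intValuation (p : 𝓞 F) ≤ ((ofAdd (-(1:ℕ) : ℤ) : Multiplicative ℤ) : ZM) :=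
          (mem_pow_iff v _ 1).mp (by rw [pow_one]; exact hp𝔭)
        have h2 : ¬ v.intValuation (p : 𝓞 F) ≤ ((ofAdd (-(2:ℕ) : ℤ) : Multiplicative ℤ) : ZM) :=
          fun h => hp𝔭2 ((mem_pow_iff v _ 2).mpr h)
        have h0 : v.intValuation (p : 𝓞 F) ≠ 0 :=
          fun h => hpne ((intVal_eq_zero_iff v _).mp h)
        obtain ⟨k, hk⟩ := zm0_exists h0
        rw [hk] at h1 h2 ⊢
        rw [WithZero.coe_le_coe, ofAdd_le] at h1
        rw [WithZero.coe_le_coe, ofAdd_le] at h2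
        rw [WithZero.coe_inj]
        push_cast at h1 h2
        congr 1
        omega
      -- main identity
      have hmain : (a * U') ^ 2 - (-(a * (d : 𝓞 F))) * s ^ 2
          = (p : 𝓞 F) * ((-a) * (V' ^ 2 - a * W' ^ 2)) := by
        linear_combination a * hE0
      have hL := key_val v hc2 (a * U') s
      have hR := key_val v hca V' W'
      have hvmain := congrArg (v.intValuation) hmain
      have hvaU : v.intValuation (a * U') = v.intValuation U' := by
        rw [map_mul, hva, one_mul]
      have hRHS : v.intValuation ((p : 𝓞 F) * (-a * (V' ^ 2 - a * W' ^ 2)))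
          = ((ofAdd (-1 : ℤ) : Multiplicative ℤ) : ZM)
            * (max (v.intValuation V') (v.intValuation W')) ^ 2 := by
        rw [map_mul, map_mul, hvp, hR, Valuation.map_neg, hva, one_mul]
      rw [hL, hvaU, hRHS] at hvmain
      -- parity contradiction
      have hs0' : v.intValuation s ≠ 0 := fun h => hs0 ((intVal_eq_zero_iff v _).mp h)
      have hM1 : max (v.intValuation U') (v.intValuation s) ≠ 0 := by
        intro h
        apply hs0'
        have := le_max_right (v.intValuation U') (v.intValuation s)
        rw [h] at this
        exact le_zero_iff.mp this
      obtain ⟨k1, hk1⟩ := zm0_exists hM1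
      have hM2 : max (v.intValuation V') (v.intValuation W') ≠ 0 := by
        intro h
        rw [h] at hvmain
        rw [hk1] at hvmain
        simp [← WithZero.coe_pow] at hvmain
      obtain ⟨k2, hk2⟩ := zm0_exists hM2
      rw [hk1, hk2, ← WithZero.coe_pow, ← WithZero.coe_pow, ← WithZero.coe_mul,
        WithZero.coe_inj] at hvmain
      have := congrArg Multiplicative.toAdd hvmain
      simp [toAdd_mul, toAdd_pow] at this
      omega
    · -- scalar case
      have hu : x.imI = 0 := by
        rcases mul_eq_zero.mp htu with h | h
        · exact absurd h ht
        · exact h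
      have hv : x.imJ = 0 := by
        rcases mul_eq_zero.mp htv with h | h
        · exact absurd h ht
        · exact h
      have hw : x.imK = 0 := by
        rcases mul_eq_zero.mp htw with h | h
        · exact absurd h ht
        · exact h
      rw [hu, hv, hw] at hre
      exact hns ⟨x.re, by rw [pow_two]; linear_combination hre⟩
end

section
/- Let γ ∈ ℂ be a root of the polynomial S(X) = X⁴ − X³ − X² − X + 1, let K = ℚ(γ) ⊆ ℂ with ring of integers O_K, and let F = ℚ(√13) ⊆ K with ring of integers O_F. Then the ideal 5·O_F is a prime ideal of O_F and is unramified in K: every prime ideal of O_K containing 5·O_F has ramification index 1 over it. -/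
set_option maxHeartbeats 1000000
set_option synthInstance.maxHeartbeats 400000

open NumberField Polynomial

section RingCerts

variable {R : Type*} [CommRing R]

lemma cert_f1 {x : R} (hq1 : x ^ 4 - x ^ 3 - x ^ 2 - x + 1 = 0) (h5 : (5 : R) = 0)
    (hpow : x ^ 5 = x) : (1 : R) = 0 := by
  have e1 : x ^ 5 = 2 * x ^ 3 + 2 * x ^ 2 + 4 := by
    linear_combination (x + 1) * hq1 - h5
  have hd : (2 * x ^ 3 + 2 * x ^ 2 + 4 : R) = x := by rw [← e1]; exact hpow
  linear_combination (3 + 4 * x + 3 * x ^ 2) * hq1 + (2 + 4 * x + x ^ 2 + x ^ 3) * hd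
    - (2 + 3 * x + x ^ 3 + x ^ 4 + x ^ 5 + x ^ 6) * h5

lemma cert_e2 {x : R} (hq1 : x ^ 4 - x ^ 3 - x ^ 2 - x + 1 = 0) (h5 : (5 : R) = 0) :
    x ^ 25 = 1 + x + x ^ 2 + 4 * x ^ 3 := by
  have e1 : x ^ 5 = 2 * x ^ 3 + 2 * x ^ 2 + 4 := by
    linear_combination (x + 1) * hq1 - h5
  have e15 : (2 * x ^ 3 + 2 * x ^ 2 + 4 : R) ^ 5 = 1 + x + x ^ 2 + 4 * x ^ 3 := by
    linear_combination (269088 + 156512 * x + 88224 * x ^ 2 + 49600 * x ^ 3 + 27808 * x ^ 4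
      + 14240 * x ^ 5 + 7264 * x ^ 6 + 3552 * x ^ 7 + 1408 * x ^ 8 + 544 * x ^ 9
      + 192 * x ^ 10 + 32 * x ^ 11) * hq1
      + (-53613 + 22515 * x + 67987 * x ^ 2 + 93356 * x ^ 3) * h5
  calc x ^ 25 = (x ^ 5) ^ 5 := by ring
    _ = 1 + x + x ^ 2 + 4 * x ^ 3 := by rw [e1, e15]

lemma cert_f2 {x : R} (hq1 : x ^ 4 - x ^ 3 - x ^ 2 - x + 1 = 0) (h5 : (5 : R) = 0)
    (hpow : x ^ 25 = x) : (1 : R) = 0 := by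
  have hd : (1 + x + x ^ 2 + 4 * x ^ 3 : R) = x := by rw [← cert_e2 hq1 h5]; exact hpow
  linear_combination (2 + 3 * x + 3 * x ^ 2) * hq1 + (4 + 4 * x + 3 * x ^ 2 + 3 * x ^ 3) * hd
    - (1 + x + x ^ 2 + 3 * x ^ 3 + 3 * x ^ 4 + 3 * x ^ 5 + 3 * x ^ 6) * h5

lemma cert_f3 {x : R} (hq1 : x ^ 4 - x ^ 3 - x ^ 2 - x + 1 = 0) (h5 : (5 : R) = 0)
    (hpow : x ^ 125 = x) : (1 : R) = 0 := by
  have e25 : (1 + x + x ^ 2 + 4 * x ^ 3 : R) ^ 5 = 1 + 3 * x + 2 * x ^ 2 + 4 * x ^ 3 := by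
    linear_combination (995590 + 577437 * x + 335515 * x ^ 2 + 194623 * x ^ 3 + 112110 * x ^ 4
      + 65062 * x ^ 5 + 36805 * x ^ 6 + 20244 * x ^ 7 + 11296 * x ^ 8 + 5248 * x ^ 9
      + 2304 * x ^ 10 + 1024 * x ^ 11) * hq1
      + (-199118 + 83631 * x + 247505 * x ^ 2 + 342793 * x ^ 3) * h5
  have e3 : x ^ 125 = 1 + 3 * x + 2 * x ^ 2 + 4 * x ^ 3 := by
    calc x ^ 125 = (x ^ 25) ^ 5 := by ring
      _ = _ := by rw [cert_e2 hq1 h5, e25]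
  have hd : (1 + 3 * x + 2 * x ^ 2 + 4 * x ^ 3 : R) = x := by rw [← e3]; exact hpow
  linear_combination (3 * x + 4 * x ^ 2) * hq1 + (1 + 2 * x ^ 2 + 4 * x ^ 3) * hd
    - (x + x ^ 2 + x ^ 3 + x ^ 4 + 3 * x ^ 5 + 4 * x ^ 6) * h5

lemma cert_F1 {y : R} (hq1 : y ^ 2 = 13) (h5 : (5 : R) = 0)
    (hpow : y ^ 5 = y) : (1 : R) = 0 := by
  linear_combination (3 + 3 * y ^ 2 + y ^ 4) * hq1 + (4 * y) * hpow
    - (-8 - 8 * y ^ 2 - 2 * y ^ 4 + y ^ 6) * h5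

end RingCerts

section Helpers

variable (K : Type*) [Field K] [NumberField K]

lemma absNorm_span_five :
    Ideal.absNorm (Ideal.span {(5 : 𝓞 K)}) = 5 ^ Module.finrank ℚ K := by
  have b := NumberField.RingOfIntegers.basis K
  rw [Ideal.absNorm_span_singleton]
  have h5 : (5 : 𝓞 K) = algebraMap ℤ (𝓞 K) 5 := by norm_num
  rw [h5, Algebra.norm_algebraMap_of_basis b, ← Module.finrank_eq_card_basis b,
    NumberField.RingOfIntegers.rank]
  simp [Int.natAbs_pow]

variable {K}

lemma eq_span_five {P : Ideal (𝓞 K)}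
    (h5 : (5 : 𝓞 K) ∈ P) (hcard : Ideal.absNorm P = 5 ^ Module.finrank ℚ K) :
    P = Ideal.span {(5 : 𝓞 K)} := by
  have hle : Ideal.span {(5 : 𝓞 K)} ≤ P := (Ideal.span_singleton_le_iff_mem _).mpr h5
  obtain ⟨J, hJ⟩ := Ideal.dvd_iff_le.mpr hle
  have hn := congrArg Ideal.absNorm hJ
  rw [_root_.map_mul Ideal.absNorm, hcard, absNorm_span_five] at hn
  have h0 : (5 : ℕ) ^ Module.finrank ℚ K ≠ 0 := by positivity
  have hJ1 : Ideal.absNorm J = 1 := (mul_right_eq_self₀.mp hn.symm).resolve_right h0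
  rw [Ideal.absNorm_eq_one_iff] at hJ1
  rw [hJ, hJ1, Ideal.mul_top]

lemma residue_setup {P : Ideal (𝓞 K)} (h5 : (5 : 𝓞 K) ∈ P) :
    ∃ f : ℕ, f ≤ Module.finrank ℚ K ∧ Ideal.absNorm P = 5 ^ f := by
  have hdv : Ideal.absNorm P ∣ 5 ^ Module.finrank ℚ K := by
    rw [← absNorm_span_five]
    exact Ideal.absNorm_dvd_absNorm_of_le ((Ideal.span_singleton_le_iff_mem _).mpr h5)
  obtain ⟨f, hfle, hf⟩ := (Nat.dvd_prime_pow (by norm_num)).mp hdv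
  exact ⟨f, hfle, hf⟩

/-- Common residue-field set-up: a prime containing 5 has residue field of
cardinality `5 ^ f`, and every element `x` satisfies `x ^ 5 ^ f = x`. -/
lemma quot_pow_card {P : Ideal (𝓞 K)} (hP : P.IsPrime) (h5 : (5 : 𝓞 K) ∈ P)
    {f : ℕ} (hf : Ideal.absNorm P = 5 ^ f) (x : 𝓞 K ⧸ P) : x ^ 5 ^ f = x := by
  have hPbot : P ≠ ⊥ := by
    intro h
    rw [h, Ideal.mem_bot] at h5
    exact (by norm_num : (5 : 𝓞 K) ≠ 0) h5
  haveI hmax : P.IsMaximal := hP.isMaximal hPbot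
  letI : Field (𝓞 K ⧸ P) := Ideal.Quotient.field P
  haveI : Finite (𝓞 K ⧸ P) := by
    rw [← Ideal.absNorm_ne_zero_iff, hf]; positivity
  letI : Fintype (𝓞 K ⧸ P) := Fintype.ofFinite _
  have hcardq : Fintype.card (𝓞 K ⧸ P) = 5 ^ f := by
    rw [← Nat.card_eq_fintype_card, ← Submodule.cardQuot_apply, ← Ideal.absNorm_apply, hf]
  rw [← hcardq]
  exact FiniteField.pow_card x

end Helpers

section Kcase

lemma K_case {K : Type*} [Field K] [NumberField K] (γ : K)
    (hroot : γ ^ 4 - γ ^ 3 - γ ^ 2 - γ + 1 = 0)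
    (hgen : Algebra.adjoin ℚ {γ} = ⊤) :
    ∀ P : Ideal (𝓞 K), P.IsPrime → (5 : 𝓞 K) ∈ P → P = Ideal.span {(5 : 𝓞 K)} := by
  have hev : (Polynomial.aeval γ) ((X : ℚ[X]) ^ 4 - X ^ 3 - X ^ 2 - X + 1) = 0 := by
    simp only [map_add, map_sub, map_pow, aeval_X, map_one]
    exact hroot
  have hmon : ((X : ℚ[X]) ^ 4 - X ^ 3 - X ^ 2 - X + 1).Monic := by monicity!
  have hint : IsIntegral ℚ γ := ⟨_, hmon, by rw [← Polynomial.aeval_def]; exact hev⟩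
  have hfr : Module.finrank ℚ K ≤ 4 := by
    have htop : IntermediateField.adjoin ℚ {γ} = ⊤ :=
      IntermediateField.adjoin_eq_top_of_algebra ℚ {γ} hgen
    have h2 : Module.finrank ℚ (IntermediateField.adjoin ℚ {γ}) = (minpoly ℚ γ).natDegree :=
      IntermediateField.adjoin.finrank hint
    rw [htop, IntermediateField.finrank_top'] at h2
    rw [h2]
    calc (minpoly ℚ γ).natDegree
        ≤ ((X : ℚ[X]) ^ 4 - X ^ 3 - X ^ 2 - X + 1).natDegree :=
          Polynomial.natDegree_le_of_dvd (minpoly.dvd ℚ γ hev) hmon.ne_zero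
      _ ≤ 4 := by compute_degree
  have hintZ : IsIntegral ℤ γ := by
    refine ⟨(X : ℤ[X]) ^ 4 - X ^ 3 - X ^ 2 - X + 1, by monicity!, ?_⟩
    rw [← Polynomial.aeval_def]
    simp only [map_add, map_sub, map_pow, aeval_X, map_one]
    exact hroot
  set γ' : 𝓞 K := ⟨γ, hintZ⟩ with hγ'def
  have hγ' : γ' ^ 4 - γ' ^ 3 - γ' ^ 2 - γ' + 1 = 0 := by
    ext
    simpa [map_sub, map_add, map_pow, map_one, show algebraMap (𝓞 K) K γ' = γ from rfl] using hroot
  intro P hP h5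
  obtain ⟨f, hfle, hf⟩ := residue_setup h5
  set x : 𝓞 K ⧸ P := Ideal.Quotient.mk P γ' with hxdef
  have hq1 : x ^ 4 - x ^ 3 - x ^ 2 - x + 1 = 0 := by
    have := congrArg (Ideal.Quotient.mk P) hγ'
    simpa [map_sub, map_add, map_pow, map_one] using this
  have h5q : (5 : 𝓞 K ⧸ P) = 0 := by
    have : Ideal.Quotient.mk P (5 : 𝓞 K) = 0 := Ideal.Quotient.eq_zero_iff_mem.mpr h5
    exact_mod_cast (show ((5 : ℕ) : 𝓞 K ⧸ P) = 0 by
      rw [← map_natCast (Ideal.Quotient.mk P)]; exact_mod_cast this)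
  have hpow : x ^ 5 ^ f = x := quot_pow_card hP h5 hf x
  have hone : (1 : 𝓞 K ⧸ P) ≠ 0 := by
    intro h
    have : P = ⊤ := by
      rw [Ideal.eq_top_iff_one, ← Ideal.Quotient.eq_zero_iff_mem, map_one]
      exact h
    exact hP.ne_top this
  have hfle4 : f ≤ 4 := le_trans hfle hfr
  interval_cases f
  · exact (hP.ne_top (Ideal.absNorm_eq_one_iff.mp (by simpa using hf))).elim
  · exact (hone (cert_f1 hq1 h5q (by simpa using hpow))).elim
  · exact (hone (cert_f2 hq1 h5q (by norm_num at hpow; exact hpow))).elim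
  · exact (hone (cert_f3 hq1 h5q (by norm_num at hpow; exact hpow))).elim
  · exact eq_span_five h5 (by rw [hf, le_antisymm hfr hfle])

end Kcase

section Fcase

lemma F_case {F : Type*} [Field F] [NumberField F] (s : F)
    (hs : s ^ 2 = 13)
    (hFgen : Algebra.adjoin ℚ {s} = ⊤) :
    ∀ P : Ideal (𝓞 F), P.IsPrime → (5 : 𝓞 F) ∈ P → P = Ideal.span {(5 : 𝓞 F)} := by
  have hev : (Polynomial.aeval s) ((X : ℚ[X]) ^ 2 - 13) = 0 := by
    simp only [map_sub, map_pow, aeval_X, map_ofNat]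
    rw [hs]; ring
  have hmon : ((X : ℚ[X]) ^ 2 - 13).Monic := by monicity!
  have hint : IsIntegral ℚ s := ⟨_, hmon, by rw [← Polynomial.aeval_def]; exact hev⟩
  have hfr : Module.finrank ℚ F ≤ 2 := by
    have htop : IntermediateField.adjoin ℚ {s} = ⊤ :=
      IntermediateField.adjoin_eq_top_of_algebra ℚ {s} hFgen
    have h2 : Module.finrank ℚ (IntermediateField.adjoin ℚ {s}) = (minpoly ℚ s).natDegree :=
      IntermediateField.adjoin.finrank hint
    rw [htop, IntermediateField.finrank_top'] at h2
    rw [h2]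
    calc (minpoly ℚ s).natDegree
        ≤ ((X : ℚ[X]) ^ 2 - 13).natDegree :=
          Polynomial.natDegree_le_of_dvd (minpoly.dvd ℚ s hev) hmon.ne_zero
      _ ≤ 2 := by compute_degree
  have hintZ : IsIntegral ℤ s := by
    refine ⟨(X : ℤ[X]) ^ 2 - 13, by monicity!, ?_⟩
    rw [← Polynomial.aeval_def]
    simp only [map_sub, map_pow, aeval_X, map_ofNat]
    rw [hs]; ring
  set s' : 𝓞 F := ⟨s, hintZ⟩ with hs'def
  have hs'' : s' ^ 2 = 13 := by
    ext
    simpa [map_pow, map_ofNat, show algebraMap (𝓞 F) F s' = s from rfl] using hs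
  intro P hP h5
  obtain ⟨f, hfle, hf⟩ := residue_setup h5
  set y : 𝓞 F ⧸ P := Ideal.Quotient.mk P s' with hydef
  have hq1 : y ^ 2 = 13 := by
    have := congrArg (Ideal.Quotient.mk P) hs''
    simpa [map_pow, map_ofNat] using this
  have h5q : (5 : 𝓞 F ⧸ P) = 0 := by
    have : Ideal.Quotient.mk P (5 : 𝓞 F) = 0 := Ideal.Quotient.eq_zero_iff_mem.mpr h5
    exact_mod_cast (show ((5 : ℕ) : 𝓞 F ⧸ P) = 0 by
      rw [← map_natCast (Ideal.Quotient.mk P)]; exact_mod_cast this)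
  have hpow : y ^ 5 ^ f = y := quot_pow_card hP h5 hf y
  have hone : (1 : 𝓞 F ⧸ P) ≠ 0 := by
    intro h
    have : P = ⊤ := by
      rw [Ideal.eq_top_iff_one, ← Ideal.Quotient.eq_zero_iff_mem, map_one]
      exact h
    exact hP.ne_top this
  have hfle2 : f ≤ 2 := le_trans hfle hfr
  interval_cases f
  · exact (hP.ne_top (Ideal.absNorm_eq_one_iff.mp (by simpa using hf))).elim
  · exact (hone (cert_F1 hq1 h5q (by simpa using hpow))).elim
  · exact eq_span_five h5 (by rw [hf, le_antisymm hfr hfle])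

end Fcase

/-- Let `γ` be a root of `S(X) = X⁴ − X³ − X² − X + 1`, `K = ℚ(γ)` with
ring of integers `𝓞 K`, and `F = ℚ(√13) ⊆ K` with ring of integers `𝓞 F`. Then the ideal
`5 · 𝓞 F` is a prime ideal of `𝓞 F` and is unramified in `K`: every prime ideal of `𝓞 K`
containing `5 · 𝓞 F` has ramification index `1` over it. -/
theorem five_inert_in_F_and_unramified_in_K
    (F K : Type*) [Field F] [Field K] [NumberField F] [NumberField K] [Algebra F K]
    (γ : K) (hroot : γ ^ 4 - γ ^ 3 - γ ^ 2 - γ + 1 = 0)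
    (hgen : Algebra.adjoin ℚ {γ} = ⊤)
    (s : F) (hs : s ^ 2 = 13) (hFgen : Algebra.adjoin ℚ {s} = ⊤) :
    (Ideal.span {(5 : 𝓞 F)}).IsPrime ∧
    ∀ P : Ideal (𝓞 K), P.IsPrime →
      Ideal.map (algebraMap (𝓞 F) (𝓞 K)) (Ideal.span {(5 : 𝓞 F)}) ≤ P →
      Ideal.ramificationIdx' (Ideal.span {(5 : 𝓞 F)}) P = 1 := by
  constructor
  · have hne : Ideal.span {(5 : 𝓞 F)} ≠ ⊤ := by
      intro h
      have h1 := absNorm_span_five F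
      rw [h, Ideal.absNorm_top] at h1
      have hpos : 0 < Module.finrank ℚ F := Module.finrank_pos
      have h2 : (1 : ℕ) < 5 ^ Module.finrank ℚ F :=
        Nat.one_lt_pow hpos.ne' (by norm_num)
      omega
    obtain ⟨M, hMmax, hMle⟩ := Ideal.exists_le_maximal _ hne
    have hM := F_case s hs hFgen M hMmax.isPrime (hMle (Ideal.mem_span_singleton_self _))
    have hsp : (Ideal.span {(5 : 𝓞 F)}).IsMaximal := hM ▸ hMmax
    exact hsp.isPrime
  · intro P hP hle
    have hmap : Ideal.map (algebraMap (𝓞 F) (𝓞 K)) (Ideal.span {(5 : 𝓞 F)})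
        = Ideal.span {(5 : 𝓞 K)} := by
      rw [Ideal.map_span, Set.image_singleton, map_ofNat]
    have h5P : (5 : 𝓞 K) ∈ P := by
      rw [hmap] at hle
      exact hle (Ideal.mem_span_singleton_self _)
    have hPeq := K_case γ hroot hgen P hP h5P
    apply Ideal.ramificationIdx'_spec
    · rw [hmap, pow_one, hPeq]
    · rw [hmap, hPeq]
      intro hcon
      have hdvd2 : Ideal.absNorm (Ideal.span {(5 : 𝓞 K)} ^ (1 + 1))
          ∣ Ideal.absNorm (Ideal.span {(5 : 𝓞 K)}) :=
        Ideal.absNorm_dvd_absNorm_of_le hcon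
      rw [_root_.map_pow Ideal.absNorm, absNorm_span_five, ← pow_mul] at hdvd2
      have hpos : 0 < Module.finrank ℚ K := Module.finrank_pos
      have := (Nat.pow_dvd_pow_iff_le_right (by norm_num : (1:ℕ) < 5)).mp hdvd2
      omega
end

section
/- The quaternion algebra B₁ = (5, −2 − 2√13 / ℚ(√13)), i.e., the four-dimensional ℚ(√13)-algebra with basis 1, I, J, IJ subject to I² = 5, J² = −2 − 2√13 and IJ = −JI, is a division ring. -/
open Quaternion IntermediateField

/-- The real quadratic field `F = ℚ(√13) ⊆ ℝ`. -/
noncomputable def QSqrt13 : IntermediateField ℚ ℝ := ℚ⟮Real.sqrt 13⟯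

/-- `√13` as an element of `ℚ(√13)`. -/
noncomputable def sqrt13 : QSqrt13 := AdjoinSimple.gen ℚ (Real.sqrt 13)

private lemma irr13 : Irrational (Real.sqrt 13) := by
  have h : Nat.Prime 13 := by norm_num
  simpa using h.irrational_sqrt

private lemma rt_sq : Real.sqrt 13 ^ 2 = 13 := Real.sq_sqrt (by norm_num)

private lemma indep (p q : ℚ) (h : (p : ℝ) + (q : ℝ) * Real.sqrt 13 = 0) :
    p = 0 ∧ q = 0 := by
  by_cases hq : q = 0
  · subst hq
    refine ⟨by exact_mod_cast (by simpa using h : (p:ℝ) = 0), rfl⟩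
  · exfalso
    apply irr13
    refine ⟨-p / q, ?_⟩
    have hq' : (q : ℝ) ≠ 0 := by exact_mod_cast hq
    push_cast
    field_simp
    linarith [h]

/-- The set `{p + q√13}` as a subfield of `ℝ`. -/
private noncomputable def S13 : Subfield ℝ where
  carrier := {x | ∃ p q : ℚ, x = (p : ℝ) + (q : ℝ) * Real.sqrt 13}
  zero_mem' := ⟨0, 0, by norm_num⟩
  one_mem' := ⟨1, 0, by norm_num⟩
  add_mem' := by
    rintro x y ⟨p, q, rfl⟩ ⟨p', q', rfl⟩
    exact ⟨p + p', q + q', by push_cast; ring⟩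
  neg_mem' := by
    rintro x ⟨p, q, rfl⟩
    exact ⟨-p, -q, by push_cast; ring⟩
  mul_mem' := by
    rintro x y ⟨p, q, rfl⟩ ⟨p', q', rfl⟩
    refine ⟨p * p' + 13 * q * q', p * q' + q * p', ?_⟩
    push_cast
    linear_combination (q : ℝ) * (q' : ℝ) * rt_sq
  inv_mem' := by
    rintro x ⟨p, q, rfl⟩
    by_cases hx : (p : ℝ) + (q : ℝ) * Real.sqrt 13 = 0
    · rw [hx, inv_zero]; exact ⟨0, 0, by norm_num⟩
    · have hD : p ^ 2 - 13 * q ^ 2 ≠ 0 := by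
        intro hD
        by_cases hq : q = 0
        · apply hx
          have hp : p = 0 := by
            have : p ^ 2 = 0 := by rw [hq] at hD; linarith
            exact pow_eq_zero_iff (by norm_num) |>.mp this
          rw [hp, hq]; norm_num
        · apply irr13
          refine ⟨|p / q|, ?_⟩
          have h2 : (|p / q| : ℚ) ^ 2 = 13 := by
            rw [sq_abs, div_pow]
            rw [div_eq_iff (pow_ne_zero 2 hq)]
            linarith
          have h4 : (0 : ℝ) ≤ ((|p / q| : ℚ) : ℝ) := by positivity
          have h3 : ((|p / q| : ℚ) : ℝ) ^ 2 = 13 := by exact_mod_cast h2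
          rw [← Real.sqrt_sq h4, h3]
      refine ⟨p / (p ^ 2 - 13 * q ^ 2), -q / (p ^ 2 - 13 * q ^ 2), ?_⟩
      refine inv_eq_of_mul_eq_one_right ?_
      have hD' : ((p : ℝ) ^ 2 - 13 * (q : ℝ) ^ 2) ≠ 0 := by
        intro h; apply hD; exact_mod_cast h
      push_cast
      field_simp
      linear_combination (-(q : ℝ) ^ 2 * ((p : ℝ) ^ 2 - 13 * (q : ℝ) ^ 2)⁻¹) * rt_sq +
        mul_inv_cancel₀ hD'

/-- The same set as an intermediate field of `ℝ / ℚ`. -/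
private noncomputable def T13 : IntermediateField ℚ ℝ :=
  { S13 with
    algebraMap_mem' := fun r => ⟨r, 0, by norm_num⟩ }

private lemma repr13 (z : QSqrt13) : ∃ p q : ℚ, (z : ℝ) = p + q * Real.sqrt 13 := by
  have h : QSqrt13 ≤ T13 := by
    rw [show QSqrt13 = ℚ⟮Real.sqrt 13⟯ from rfl]
    refine adjoin_le_iff.mpr ?_
    rintro x hx
    rw [Set.mem_singleton_iff] at hx
    subst hx
    exact ⟨0, 1, by norm_num⟩
  exact h z.2

private lemma key5 : ∀ a b c d : ZMod 5,
    a ^ 2 + 13 * b ^ 2 + 2 * c ^ 2 + 26 * d ^ 2 + 52 * c * d = 0 →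
    2 * a * b + 2 * c ^ 2 + 26 * d ^ 2 + 4 * c * d = 0 →
    a = 0 ∧ b = 0 ∧ c = 0 ∧ d = 0 := by decide

private lemma step5 (a1 b1 a2 b2 a3 b3 a4 b4 : ℤ)
    (h1 : a1 ^ 2 + 13 * b1 ^ 2 + 2 * a3 ^ 2 + 26 * b3 ^ 2 + 52 * a3 * b3 =
      5 * (a2 ^ 2 + 13 * b2 ^ 2 + 2 * a4 ^ 2 + 26 * b4 ^ 2 + 52 * a4 * b4))
    (h2 : 2 * a1 * b1 + 2 * a3 ^ 2 + 26 * b3 ^ 2 + 4 * a3 * b3 =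
      5 * (2 * a2 * b2 + 2 * a4 ^ 2 + 26 * b4 ^ 2 + 4 * a4 * b4)) :
    (5 : ℤ) ∣ a1 ∧ (5 : ℤ) ∣ b1 ∧ (5 : ℤ) ∣ a3 ∧ (5 : ℤ) ∣ b3 := by
  have e1 := congrArg (Int.cast : ℤ → ZMod 5) h1
  have e2 := congrArg (Int.cast : ℤ → ZMod 5) h2
  push_cast at e1 e2
  rw [show (5 : ZMod 5) = 0 by decide, zero_mul] at e1 e2
  obtain ⟨u1, u2, u3, u4⟩ := key5 (a1 : ZMod 5) (b1 : ZMod 5) (a3 : ZMod 5) (b3 : ZMod 5) e1 e2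
  refine ⟨?_, ?_, ?_, ?_⟩ <;>
    [exact (ZMod.intCast_zmod_eq_zero_iff_dvd a1 5).mp u1;
     exact (ZMod.intCast_zmod_eq_zero_iff_dvd b1 5).mp u2;
     exact (ZMod.intCast_zmod_eq_zero_iff_dvd a3 5).mp u3;
     exact (ZMod.intCast_zmod_eq_zero_iff_dvd b3 5).mp u4]

private lemma descent : ∀ n : ℕ, ∀ a1 b1 a2 b2 a3 b3 a4 b4 : ℤ,
    a1.natAbs + b1.natAbs + a2.natAbs + b2.natAbs +
      a3.natAbs + b3.natAbs + a4.natAbs + b4.natAbs ≤ n →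
    a1 ^ 2 + 13 * b1 ^ 2 + 2 * a3 ^ 2 + 26 * b3 ^ 2 + 52 * a3 * b3 =
      5 * (a2 ^ 2 + 13 * b2 ^ 2 + 2 * a4 ^ 2 + 26 * b4 ^ 2 + 52 * a4 * b4) →
    2 * a1 * b1 + 2 * a3 ^ 2 + 26 * b3 ^ 2 + 4 * a3 * b3 =
      5 * (2 * a2 * b2 + 2 * a4 ^ 2 + 26 * b4 ^ 2 + 4 * a4 * b4) →
    a1 = 0 ∧ b1 = 0 ∧ a2 = 0 ∧ b2 = 0 ∧ a3 = 0 ∧ b3 = 0 ∧ a4 = 0 ∧ b4 = 0 := by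
  intro n
  induction n with
  | zero =>
    intro a1 b1 a2 b2 a3 b3 a4 b4 hsum _ _
    simp only [Nat.le_zero, Nat.add_eq_zero, Int.natAbs_eq_zero] at hsum
    tauto
  | succ n ih =>
    intro a1 b1 a2 b2 a3 b3 a4 b4 hsum h1 h2
    obtain ⟨⟨c1, hc1⟩, ⟨d1, hd1⟩, ⟨c3, hc3⟩, ⟨d3, hd3⟩⟩ :=
      step5 a1 b1 a2 b2 a3 b3 a4 b4 h1 h2
    -- swap roles: (a2,b2,a4,b4) now on the left
    have h1' : a2 ^ 2 + 13 * b2 ^ 2 + 2 * a4 ^ 2 + 26 * b4 ^ 2 + 52 * a4 * b4 =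
        5 * (c1 ^ 2 + 13 * d1 ^ 2 + 2 * c3 ^ 2 + 26 * d3 ^ 2 + 52 * c3 * d3) := by
      apply mul_left_cancel₀ (show (5 : ℤ) ≠ 0 by norm_num)
      subst hc1 hd1 hc3 hd3
      linear_combination -h1
    have h2' : 2 * a2 * b2 + 2 * a4 ^ 2 + 26 * b4 ^ 2 + 4 * a4 * b4 =
        5 * (2 * c1 * d1 + 2 * c3 ^ 2 + 26 * d3 ^ 2 + 4 * c3 * d3) := by
      apply mul_left_cancel₀ (show (5 : ℤ) ≠ 0 by norm_num)
      subst hc1 hd1 hc3 hd3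
      linear_combination -h2
    obtain ⟨⟨c2, hc2⟩, ⟨d2, hd2⟩, ⟨c4, hc4⟩, ⟨d4, hd4⟩⟩ :=
      step5 a2 b2 c1 d1 a4 b4 c3 d3 h1' h2'
    have h1'' : c1 ^ 2 + 13 * d1 ^ 2 + 2 * c3 ^ 2 + 26 * d3 ^ 2 + 52 * c3 * d3 =
        5 * (c2 ^ 2 + 13 * d2 ^ 2 + 2 * c4 ^ 2 + 26 * d4 ^ 2 + 52 * c4 * d4) := by
      apply mul_left_cancel₀ (show (5 : ℤ) ≠ 0 by norm_num)
      subst hc2 hd2 hc4 hd4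
      linear_combination -h1'
    have h2'' : 2 * c1 * d1 + 2 * c3 ^ 2 + 26 * d3 ^ 2 + 4 * c3 * d3 =
        5 * (2 * c2 * d2 + 2 * c4 ^ 2 + 26 * d4 ^ 2 + 4 * c4 * d4) := by
      apply mul_left_cancel₀ (show (5 : ℤ) ≠ 0 by norm_num)
      subst hc2 hd2 hc4 hd4
      linear_combination -h2'
    rw [hc1, hd1, hc2, hd2, hc3, hd3, hc4, hd4] at hsum
    simp only [Int.natAbs_mul, show (5 : ℤ).natAbs = 5 from rfl] at hsum
    have hsum' : c1.natAbs + d1.natAbs + c2.natAbs + d2.natAbs +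
        c3.natAbs + d3.natAbs + c4.natAbs + d4.natAbs ≤ n := by omega
    obtain ⟨u1, u2, u3, u4, u5, u6, u7, u8⟩ := ih c1 d1 c2 d2 c3 d3 c4 d4 hsum' h1'' h2''
    exact ⟨by simp [hc1, u1], by simp [hd1, u2], by simp [hc2, u3], by simp [hd2, u4],
      by simp [hc3, u5], by simp [hd3, u6], by simp [hc4, u7], by simp [hd4, u8]⟩

private lemma intify (q : ℚ) (m : ℤ) (h : (q.den : ℤ) ∣ m) :
    ∃ n : ℤ, q * (m : ℚ) = (n : ℚ) := by
  obtain ⟨k, rfl⟩ := h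
  refine ⟨q.num * k, ?_⟩
  push_cast
  rw [← mul_assoc, Rat.mul_den_eq_num]

private lemma rat_sol (p1 q1 p2 q2 p3 q3 p4 q4 : ℚ)
    (hP : p1 ^ 2 + 13 * q1 ^ 2 - 5 * p2 ^ 2 - 65 * q2 ^ 2 + 2 * p3 ^ 2 + 26 * q3 ^ 2 +
      52 * p3 * q3 - 10 * p4 ^ 2 - 130 * q4 ^ 2 - 260 * p4 * q4 = 0)
    (hQ : 2 * p1 * q1 - 10 * p2 * q2 + 2 * p3 ^ 2 + 26 * q3 ^ 2 + 4 * p3 * q3 -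
      10 * p4 ^ 2 - 130 * q4 ^ 2 - 20 * p4 * q4 = 0) :
    p1 = 0 ∧ q1 = 0 ∧ p2 = 0 ∧ q2 = 0 ∧ p3 = 0 ∧ q3 = 0 ∧ p4 = 0 ∧ q4 = 0 := by
  set d : ℤ := (p1.den : ℤ) * q1.den * p2.den * q2.den * p3.den * q3.den * p4.den * q4.den
    with hd
  have hdpos : 0 < d := by
    have := p1.den_pos; have := q1.den_pos; have := p2.den_pos; have := q2.den_pos
    have := p3.den_pos; have := q3.den_pos; have := p4.den_pos; have := q4.den_pos
    positivity
  have hdne : ((d : ℚ)) ≠ 0 := by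
    exact_mod_cast hdpos.ne'
  obtain ⟨n1, hn1⟩ := intify p1 d ⟨(q1.den : ℤ) * p2.den * q2.den * p3.den * q3.den * p4.den * q4.den, by rw [hd]; ring⟩
  obtain ⟨m1, hm1⟩ := intify q1 d ⟨(p1.den : ℤ) * p2.den * q2.den * p3.den * q3.den * p4.den * q4.den, by rw [hd]; ring⟩
  obtain ⟨n2, hn2⟩ := intify p2 d ⟨(p1.den : ℤ) * q1.den * q2.den * p3.den * q3.den * p4.den * q4.den, by rw [hd]; ring⟩
  obtain ⟨m2, hm2⟩ := intify q2 d ⟨(p1.den : ℤ) * q1.den * p2.den * p3.den * q3.den * p4.den * q4.den, by rw [hd]; ring⟩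
  obtain ⟨n3, hn3⟩ := intify p3 d ⟨(p1.den : ℤ) * q1.den * p2.den * q2.den * q3.den * p4.den * q4.den, by rw [hd]; ring⟩
  obtain ⟨m3, hm3⟩ := intify q3 d ⟨(p1.den : ℤ) * q1.den * p2.den * q2.den * p3.den * p4.den * q4.den, by rw [hd]; ring⟩
  obtain ⟨n4, hn4⟩ := intify p4 d ⟨(p1.den : ℤ) * q1.den * p2.den * q2.den * p3.den * q3.den * q4.den, by rw [hd]; ring⟩
  obtain ⟨m4, hm4⟩ := intify q4 d ⟨(p1.den : ℤ) * q1.den * p2.den * q2.den * p3.den * q3.den * p4.den, by rw [hd]; ring⟩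
  have e1 : (n1 : ℚ) ^ 2 + 13 * m1 ^ 2 + 2 * n3 ^ 2 + 26 * m3 ^ 2 + 52 * n3 * m3 =
      5 * (n2 ^ 2 + 13 * m2 ^ 2 + 2 * n4 ^ 2 + 26 * m4 ^ 2 + 52 * n4 * m4) := by
    rw [← hn1, ← hm1, ← hn2, ← hm2, ← hn3, ← hm3, ← hn4, ← hm4]
    linear_combination (d : ℚ) ^ 2 * hP
  have e2 : 2 * (n1 : ℚ) * m1 + 2 * n3 ^ 2 + 26 * m3 ^ 2 + 4 * n3 * m3 =
      5 * (2 * n2 * m2 + 2 * n4 ^ 2 + 26 * m4 ^ 2 + 4 * n4 * m4) := by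
    rw [← hn1, ← hm1, ← hn2, ← hm2, ← hn3, ← hm3, ← hn4, ← hm4]
    linear_combination (d : ℚ) ^ 2 * hQ
  have e1' : n1 ^ 2 + 13 * m1 ^ 2 + 2 * n3 ^ 2 + 26 * m3 ^ 2 + 52 * n3 * m3 =
      5 * (n2 ^ 2 + 13 * m2 ^ 2 + 2 * n4 ^ 2 + 26 * m4 ^ 2 + 52 * n4 * m4) := by
    exact_mod_cast e1
  have e2' : 2 * n1 * m1 + 2 * n3 ^ 2 + 26 * m3 ^ 2 + 4 * n3 * m3 =
      5 * (2 * n2 * m2 + 2 * n4 ^ 2 + 26 * m4 ^ 2 + 4 * n4 * m4) := by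
    exact_mod_cast e2
  obtain ⟨z1, w1, z2, w2, z3, w3, z4, w4⟩ :=
    descent (n1.natAbs + m1.natAbs + n2.natAbs + m2.natAbs +
      n3.natAbs + m3.natAbs + n4.natAbs + m4.natAbs)
      n1 m1 n2 m2 n3 m3 n4 m4 le_rfl e1' e2'
  have hz : ∀ (p : ℚ) (n : ℤ), p * (d : ℚ) = n → n = 0 → p = 0 := by
    intro p n hpn hn0
    rw [hn0] at hpn
    push_cast at hpn
    exact (mul_eq_zero.mp hpn).resolve_right hdne
  exact ⟨hz p1 n1 hn1 z1, hz q1 m1 hm1 w1, hz p2 n2 hn2 z2, hz q2 m2 hm2 w2,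
    hz p3 n3 hn3 z3, hz q3 m3 hm3 w3, hz p4 n4 hn4 z4, hz q4 m4 hm4 w4⟩

/-- The quaternion algebra `B₁ = (5, −2 − 2√13 / ℚ(√13))`, i.e. the
four-dimensional `ℚ(√13)`-algebra with basis `1, I, J, IJ` subject to `I² = 5`,
`J² = −2 − 2√13` and `IJ = −JI`, is a division ring: every nonzero element is a unit. -/
theorem quaternionAlgebra_five_neg2sub2sqrt13_isDivisionRing :
    ∀ x : ℍ[QSqrt13, (5 : QSqrt13), -2 - 2 * sqrt13], x ≠ 0 → IsUnit x := by
  intro x hx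
  have key : x * star x = ((x.re ^ 2 - 5 * x.imI ^ 2 - (-2 - 2 * sqrt13) * x.imJ ^ 2 +
      5 * (-2 - 2 * sqrt13) * x.imK ^ 2 : QSqrt13) :
        ℍ[QSqrt13, (5 : QSqrt13), -2 - 2 * sqrt13]) := by
    rw [QuaternionAlgebra.mul_star_eq_coe]
    congr 1
    simp only [QuaternionAlgebra.re_mul, QuaternionAlgebra.re_star, QuaternionAlgebra.imI_star,
      QuaternionAlgebra.imJ_star, QuaternionAlgebra.imK_star]
    ring
  have hNne : (x.re ^ 2 - 5 * x.imI ^ 2 - (-2 - 2 * sqrt13) * x.imJ ^ 2 +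
      5 * (-2 - 2 * sqrt13) * x.imK ^ 2 : QSqrt13) ≠ 0 := by
    intro hN0
    obtain ⟨p1, q1, h1⟩ := repr13 x.re
    obtain ⟨p2, q2, h2⟩ := repr13 x.imI
    obtain ⟨p3, q3, h3⟩ := repr13 x.imJ
    obtain ⟨p4, q4, h4⟩ := repr13 x.imK
    have h0 := congrArg (Subtype.val : QSqrt13 → ℝ) hN0
    push_cast [show ((sqrt13 : QSqrt13) : ℝ) = Real.sqrt 13 from rfl] at h0
    rw [show ((5 : QSqrt13) : ℝ) = 5 from rfl, show ((2 : QSqrt13) : ℝ) = 2 from rfl] at h0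
    rw [h1, h2, h3, h4] at h0
    have hrs : Real.sqrt 13 ^ 2 = 13 := rt_sq
    have hPQ : ((p1 ^ 2 + 13 * q1 ^ 2 - 5 * p2 ^ 2 - 65 * q2 ^ 2 + 2 * p3 ^ 2 + 26 * q3 ^ 2 +
        52 * p3 * q3 - 10 * p4 ^ 2 - 130 * q4 ^ 2 - 260 * p4 * q4 : ℚ) : ℝ) +
        ((2 * p1 * q1 - 10 * p2 * q2 + 2 * p3 ^ 2 + 26 * q3 ^ 2 + 4 * p3 * q3 -
        10 * p4 ^ 2 - 130 * q4 ^ 2 - 20 * p4 * q4 : ℚ) : ℝ) * Real.sqrt 13 = 0 := by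
      push_cast
      linear_combination h0 - (((q1 : ℝ) ^ 2 - 5 * q2 ^ 2 + 2 * q3 ^ 2 + 4 * p3 * q3 -
        10 * q4 ^ 2 - 20 * p4 * q4) + (2 * (q3 : ℝ) ^ 2 - 10 * q4 ^ 2) * Real.sqrt 13) * hrs
    obtain ⟨hP, hQ⟩ := indep _ _ hPQ
    obtain ⟨z1, w1, z2, w2, z3, w3, z4, w4⟩ := rat_sol p1 q1 p2 q2 p3 q3 p4 q4 hP hQ
    apply hx
    have hre : x.re = 0 := by
      apply Subtype.ext; rw [h1, z1, w1]; norm_num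
    have himI : x.imI = 0 := by
      apply Subtype.ext; rw [h2, z2, w2]; norm_num
    have himJ : x.imJ = 0 := by
      apply Subtype.ext; rw [h3, z3, w3]; norm_num
    have himK : x.imK = 0 := by
      apply Subtype.ext; rw [h4, z4, w4]; norm_num
    ext <;> simp [hre, himI, himJ, himK]
  refine isUnit_iff_exists.mpr
    ⟨star x * (((x.re ^ 2 - 5 * x.imI ^ 2 - (-2 - 2 * sqrt13) * x.imJ ^ 2 +
      5 * (-2 - 2 * sqrt13) * x.imK ^ 2 : QSqrt13)⁻¹ : QSqrt13) :
        ℍ[QSqrt13, (5 : QSqrt13), -2 - 2 * sqrt13]), ?_, ?_⟩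
  · rw [← mul_assoc, key, ← QuaternionAlgebra.coe_mul, mul_inv_cancel₀ hNne,
      QuaternionAlgebra.coe_one]
  · rw [mul_assoc, QuaternionAlgebra.coe_commutes, ← mul_assoc, star_comm_self', key,
      ← QuaternionAlgebra.coe_mul, mul_inv_cancel₀ hNne, QuaternionAlgebra.coe_one]
end

section
/- Let n ≥ 1 and let A be an n × n integer matrix with determinant ±1 such that no complex eigenvalue of A is a root of unity, and let T : ℝⁿ/ℤⁿ → ℝⁿ/ℤⁿ be the induced automorphism of the torus, which preserves the Haar probability measure μ. Let c ∈ ℂ with |c| = 1 and c ≠ 1. If g ∈ L²(ℝⁿ/ℤⁿ, μ; ℂ) satisfies g(Tx) = c·g(x) for μ-almost every x, then g = 0 μ-almost everywhere. -/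
open MeasureTheory

open Complex Submodule Set
noncomputable section
namespace ToralAux
local instance : Fact ((0:ℝ) < 1) := ⟨one_pos⟩
variable (n : ℕ)
abbrev 𝕋 := AddCircle (1:ℝ)
abbrev X (n : ℕ) := Fin n → 𝕋
lemma vol_eq : (volume : Measure 𝕋) = AddCircle.haarAddCircle := by
  rw [AddCircle.volume_eq_smul_haarAddCircle, ENNReal.ofReal_one, one_smul]
instance : IsProbabilityMeasure (volume : Measure 𝕋) := by rw [vol_eq]; infer_instance
def eChar (k : Fin n → ℤ) : C(X n, ℂ) :=
  ⟨fun x => ∏ j, fourier (k j) (x j), by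
    refine continuous_finset_prod _ fun j _ => ?_
    exact (fourier (k j)).continuous.comp (continuous_apply j)⟩
variable {n}
lemma eChar_apply (k : Fin n → ℤ) (x : X n) : eChar n k x = ∏ j, fourier (k j) (x j) := rfl
lemma eChar_zero : eChar n 0 = 1 := by ext x; simp [eChar_apply, fourier_zero]
lemma eChar_add (k l : Fin n → ℤ) : eChar n (k + l) = eChar n k * eChar n l := by
  ext x
  simp only [eChar_apply, ContinuousMap.mul_apply, ← Finset.prod_mul_distrib]
  exact Finset.prod_congr rfl fun j _ => by simp [← fourier_add]
lemma eChar_conj (k : Fin n → ℤ) (x : X n) :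
    (starRingEnd ℂ) (eChar n k x) = eChar n (-k) x := by
  simp only [eChar_apply, map_prod]
  exact Finset.prod_congr rfl fun j _ => by simp [← fourier_neg]

lemma integral_eChar (k : Fin n → ℤ) :
    ∫ x : X n, eChar n k x ∂volume = if k = 0 then 1 else 0 := by
  split_ifs with h
  · subst h
    simp only [eChar_zero]
    simpa using integral_const (μ := (volume : Measure (X n))) (1 : ℂ)
  · obtain ⟨j, hj⟩ : ∃ j, k j ≠ 0 := by
      by_contra hc; push_neg at hc; exact h (funext hc)
    have hneg : ∀ x : X n, eChar n k (x + (Pi.single j ((1 / 2 / (k j) : ℝ) : 𝕋) : X n))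
        = - eChar n k x := by
      intro x
      have key : ∀ i, fourier (k i) ((x + (Pi.single j ((1 / 2 / (k j) : ℝ) : 𝕋) : X n)) i)
          = (if i = j then (-1 : ℂ) else 1) * fourier (k i) (x i) := by
        intro i
        rcases eq_or_ne i j with rfl | hij
        · simp only [Pi.add_apply, Pi.single_eq_same]
          rw [fourier_add_half_inv_index hj one_pos]
          simp
        · simp [Pi.add_apply, Pi.single_eq_of_ne hij, hij]
      simp only [eChar_apply, key, Finset.prod_mul_distrib]
      rw [Finset.prod_ite_eq' Finset.univ j (fun _ => (-1 : ℂ))]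
      simp
    exact integral_eq_zero_of_add_right_eq_neg hneg

def eLp (k : Fin n → ℤ) : Lp ℂ 2 (volume : Measure (X n)) :=
  ContinuousMap.toLp (E := ℂ) 2 volume ℂ (eChar n k)

lemma orthonormal_eLp : Orthonormal ℂ (eLp (n := n)) := by
  rw [orthonormal_iff_ite]
  intro k l
  rw [eLp, eLp, ContinuousMap.inner_toLp (volume : Measure (X n)) (eChar n k) (eChar n l)]
  have : ∀ x : X n, eChar n l x * (starRingEnd ℂ) (eChar n k x) = eChar n (-k + l) x := by
    intro x; rw [mul_comm, eChar_conj, eChar_add]; rfl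
  simp_rw [this]
  rw [integral_eChar]
  simp [neg_add_eq_zero]

variable (n) in
def eSubalgebra : StarSubalgebra ℂ C(X n, ℂ) where
  toSubalgebra := Algebra.adjoin ℂ (range (eChar n))
  star_mem' := by
    show Algebra.adjoin ℂ (range (eChar n)) ≤ star (Algebra.adjoin ℂ (range (eChar n)))
    refine Algebra.adjoin_le ?_
    rintro - ⟨k, rfl⟩
    refine Algebra.subset_adjoin ⟨-k, ?_⟩
    ext1 x
    exact (eChar_conj k x).symm

lemma eSubalgebra_coe :
    Subalgebra.toSubmodule (eSubalgebra n).toSubalgebra = span ℂ (range (eChar n)) := by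
  apply Algebra.adjoin_eq_span_of_subset
  refine Subset.trans ?_ Submodule.subset_span
  intro x hx
  refine Submonoid.closure_induction (fun _ => id) ⟨0, ?_⟩ ?_ hx
  · exact eChar_zero
  · rintro - - - - ⟨k, rfl⟩ ⟨l, rfl⟩
    exact ⟨k + l, eChar_add k l⟩

lemma eSubalgebra_separatesPoints : (eSubalgebra n).SeparatesPoints := by
  intro x y hxy
  obtain ⟨j, hj⟩ : ∃ j, x j ≠ y j := by
    by_contra hc; push_neg at hc; exact hxy (funext hc)
  refine ⟨_, ⟨eChar n (Pi.single j 1), Algebra.subset_adjoin ⟨Pi.single j 1, rfl⟩, rfl⟩, ?_⟩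
  have hev : ∀ z : X n, eChar n (Pi.single j 1) z = fourier 1 (z j) := by
    intro z
    rw [eChar_apply]
    rw [Finset.prod_eq_single j (fun i _ hij => by simp [Pi.single_eq_of_ne hij, fourier_zero])
      (by simp)]
    simp
  dsimp only
  rw [hev, hev, fourier_one, fourier_one]
  intro hc
  rw [Circle.coe_inj] at hc
  exact hj (AddCircle.injective_toCircle one_ne_zero hc)

lemma eSubalgebra_closure_eq_top : (eSubalgebra n).topologicalClosure = ⊤ :=
  ContinuousMap.starSubalgebra_topologicalClosure_eq_top_of_separatesPoints _
    eSubalgebra_separatesPoints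

lemma span_eChar_closure_eq_top :
    (span ℂ (range (eChar n))).topologicalClosure = ⊤ := by
  rw [← eSubalgebra_coe]
  exact congr_arg (Subalgebra.toSubmodule <| StarSubalgebra.toSubalgebra ·)
    eSubalgebra_closure_eq_top

lemma span_eLp_closure_eq_top :
    (span ℂ (range (eLp (n := n)))).topologicalClosure = ⊤ := by
  convert (ContinuousMap.toLp_denseRange ℂ (volume : Measure (X n)) ℂ
      (by norm_num : (2 : ENNReal) ≠ ⊤)).topologicalClosure_map_submodule
      span_eChar_closure_eq_top
  · rfl
  erw [map_span, range_comp]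
  simp only [ContinuousLinearMap.coe_coe]

lemma eq_zero_of_orthogonal_eLp (G : Lp ℂ 2 (volume : Measure (X n)))
    (hG : ∀ k, inner (𝕜 := ℂ) (eLp k) G = 0) : G = 0 := by
  have h1 : (span ℂ (range (eLp (n := n))))ᗮ = ⊥ :=
    Submodule.topologicalClosure_eq_top_iff.mp span_eLp_closure_eq_top
  have h2 : G ∈ (span ℂ (range (eLp (n := n))))ᗮ := by
    rw [Submodule.mem_orthogonal]
    intro u hu
    induction hu using Submodule.span_induction with
    | mem u hu => obtain ⟨k, rfl⟩ := hu; exact hG k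
    | zero => simp
    | add u v _ _ h h' => rw [inner_add_left, h, h', add_zero]
    | smul c u _ h => rw [inner_smul_left, h, mul_zero]
  rw [h1] at h2
  simpa using h2


variable (n) in
/-- The map on the torus induced by an integer matrix. -/
def Tmap (A : Matrix (Fin n) (Fin n) ℤ) : X n → X n := fun x i => ∑ j, A i j • x j

lemma Tmap_apply (A : Matrix (Fin n) (Fin n) ℤ) (x : X n) (i : Fin n) :
    Tmap n A x i = ∑ j, A i j • x j := rfl

lemma Tmap_continuous (A : Matrix (Fin n) (Fin n) ℤ) : Continuous (Tmap n A) := by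
  refine continuous_pi fun i => continuous_finset_sum _ fun j _ => ?_
  exact (continuous_zsmul (A i j)).comp (continuous_apply j)

lemma Tmap_Tmap (A B : Matrix (Fin n) (Fin n) ℤ) (x : X n) :
    Tmap n A (Tmap n B x) = Tmap n (A * B) x := by
  funext i
  simp only [Tmap_apply, Finset.smul_sum, Matrix.mul_apply]
  rw [Finset.sum_comm]
  refine Finset.sum_congr rfl fun k _ => ?_
  rw [Finset.sum_smul]
  exact Finset.sum_congr rfl fun j _ => (mul_smul (A i j) (B j k) (x k)).symm

lemma Tmap_one (x : X n) : Tmap n 1 x = x := by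
  funext i
  simp [Tmap_apply, Matrix.one_apply]

variable (n) in
/-- `Tmap` as an additive monoid hom. -/
def TmapHom (A : Matrix (Fin n) (Fin n) ℤ) : X n →+ X n where
  toFun := Tmap n A
  map_zero' := by funext i; simp [Tmap_apply]
  map_add' x y := by
    funext i
    simp [Tmap_apply, smul_add, Finset.sum_add_distrib]

lemma Tmap_surjective (A : Matrix (Fin n) (Fin n) ℤ) (hA : IsUnit A.det) :
    Function.Surjective (Tmap n A) := by
  intro y
  exact ⟨Tmap n A⁻¹ y, by rw [Tmap_Tmap, Matrix.mul_nonsing_inv _ hA, Tmap_one]⟩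

lemma Tmap_measurePreserving (A : Matrix (Fin n) (Fin n) ℤ) (hA : IsUnit A.det) :
    MeasurePreserving (Tmap n A) (volume : Measure (X n)) volume := by
  have hcont := Tmap_continuous (n := n) A
  have hmeas : Measurable (Tmap n A) := hcont.measurable
  refine ⟨hmeas, ?_⟩
  haveI : IsProbabilityMeasure ((volume : Measure (X n)).map (Tmap n A)) :=
    Measure.isProbabilityMeasure_map hmeas.aemeasurable
  haveI : Measure.IsAddHaarMeasure ((volume : Measure (X n)).map (Tmap n A)) := by
    refine Measure.isAddHaarMeasure_map (volume : Measure (X n)) (TmapHom n A) hcont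
      (Tmap_surjective A hA) ?_
    rw [Filter.cocompact_eq_bot]
    exact Filter.tendsto_bot
  exact Measure.isAddHaarMeasure_eq_of_isProbabilityMeasure _ _

lemma fourier_sum_arg {m : ℤ} {s : Finset (Fin n)} (y : Fin n → 𝕋) :
    fourier m (∑ j ∈ s, y j) = ∏ j ∈ s, fourier m (y j) := by
  classical
  induction s using Finset.induction_on with
  | empty => simp [fourier_apply]
  | insert _ _ hx ih =>
      rw [Finset.sum_insert hx, Finset.prod_insert hx, ← ih]
      simp only [fourier_apply, smul_add, AddCircle.toCircle_add, Circle.coe_mul]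

lemma fourier_sum_exp {s : Finset (Fin n)} (m : Fin n → ℤ) (x : 𝕋) :
    fourier (∑ i ∈ s, m i) x = ∏ i ∈ s, fourier (m i) x := by
  classical
  induction s using Finset.induction_on with
  | empty => simp [fourier_apply]
  | insert _ _ hx ih => rw [Finset.sum_insert hx, Finset.prod_insert hx, ← ih, fourier_add]

lemma eChar_comp (A : Matrix (Fin n) (Fin n) ℤ) (k : Fin n → ℤ) (x : X n) :
    eChar n k (Tmap n A x) = eChar n (Matrix.vecMul k A) x := by
  simp only [eChar_apply, Tmap_apply]
  have h1 : ∀ i, (fourier (k i) (∑ j, A i j • x j) : ℂ) = ∏ j, fourier (k i * A i j) (x j) := by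
    intro i
    rw [fourier_sum_arg]
    refine Finset.prod_congr rfl fun j _ => ?_
    rw [fourier_apply, fourier_apply, ← mul_smul]
  simp_rw [h1]
  rw [Finset.prod_comm]
  refine Finset.prod_congr rfl fun j _ => ?_
  rw [Matrix.vecMul, dotProduct, fourier_sum_exp]


lemma eval_charpoly (M : Matrix (Fin n) (Fin n) ℂ) (z : ℂ) :
    M.charpoly.eval z = (algebraMap ℂ (Matrix (Fin n) (Fin n) ℂ) z - M).det := by
  rw [Matrix.charpoly, ← Polynomial.coe_evalRingHom, RingHom.map_det]
  congr 1
  ext i j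
  rcases eq_or_ne i j with rfl | hij
  · simp [Matrix.charmatrix_apply_eq, Matrix.algebraMap_matrix_apply]
  · simp [Matrix.charmatrix_apply_ne _ _ _ hij, Matrix.algebraMap_matrix_apply, hij]

lemma no_period (A : Matrix (Fin n) (Fin n) ℤ)
    (hev : ∀ z : ℂ, (Matrix.charpoly (A.map (Int.cast : ℤ → ℂ))).IsRoot z →
      ∀ k : ℕ, k ≠ 0 → z ^ k ≠ 1)
    (k : Fin n → ℤ) (hk : k ≠ 0) (d : ℕ) (hd : d ≠ 0)
    (h : Matrix.vecMul k (A ^ d) = k) : False := by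
  classical
  set Ac := A.map (Int.cast : ℤ → ℂ) with hAc
  set v : Fin n → ℂ := fun i => (k i : ℂ) with hv
  have hvne : v ≠ 0 := by
    intro h0
    apply hk
    funext i
    have := congrFun h0 i
    simpa [hv] using this
  have hpow : Ac ^ d = (A ^ d).map (Int.cast : ℤ → ℂ) := by
    have := (map_pow ((Int.castRingHom ℂ).mapMatrix) A d).symm
    simpa [RingHom.mapMatrix_apply] using this
  have hvec : Matrix.vecMul v (Ac ^ d) = v := by
    rw [hpow]
    funext j
    have hj := congrFun h j
    simp only [Matrix.vecMul, dotProduct] at hj ⊢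
    simp only [hv, Matrix.map_apply]
    push_cast
    exact_mod_cast congrArg (Int.cast : ℤ → ℂ) hj
  have hker : Matrix.vecMul v (Ac ^ d - 1) = 0 := by
    rw [Matrix.vecMul_sub, hvec, Matrix.vecMul_one, sub_self]
  have hdet : (Ac ^ d - 1).det = 0 :=
    Matrix.exists_vecMul_eq_zero_iff.mp ⟨v, hvne, hker⟩
  have hone : (1 : ℂ) ∈ spectrum ℂ (Ac ^ d) := by
    rw [spectrum.mem_iff, map_one, Matrix.isUnit_iff_isUnit_det, isUnit_iff_ne_zero, not_not]
    have : (1 : Matrix (Fin n) (Fin n) ℂ) - Ac ^ d = -(Ac ^ d - 1) := by rw [neg_sub]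
    rw [this, Matrix.det_neg, hdet, mul_zero]
  rw [spectrum.map_pow_of_pos _ (Nat.pos_of_ne_zero hd)] at hone
  obtain ⟨z, hz, hzd⟩ := hone
  rw [spectrum.mem_iff, Matrix.isUnit_iff_isUnit_det, isUnit_iff_ne_zero, not_not] at hz
  refine hev z ?_ d hd hzd
  rw [Polynomial.IsRoot, eval_charpoly]
  exact hz

lemma orbit_injective (A : Matrix (Fin n) (Fin n) ℤ) (hA : IsUnit A.det)
    (hev : ∀ z : ℂ, (Matrix.charpoly (A.map (Int.cast : ℤ → ℂ))).IsRoot z →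
      ∀ k : ℕ, k ≠ 0 → z ^ k ≠ 1)
    (k : Fin n → ℤ) (hk : k ≠ 0) :
    Function.Injective fun m : ℕ => Matrix.vecMul k (A ^ m) := by
  have key : ∀ a b : ℕ, a < b → Matrix.vecMul k (A ^ a) = Matrix.vecMul k (A ^ b) → False := by
    intro a b hab heq
    have hAa : IsUnit (A ^ a).det := by rw [Matrix.det_pow]; exact hA.pow a
    have hb : A ^ b = A ^ (b - a) * A ^ a := by
      rw [← pow_add]; congr 1; omega
    have h2 : Matrix.vecMul (Matrix.vecMul k (A ^ (b - a))) (A ^ a) =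
        Matrix.vecMul k (A ^ a) := by
      rw [Matrix.vecMul_vecMul, ← hb, heq]
    have h3 : Matrix.vecMul k (A ^ (b - a)) = k := by
      have := congrArg (fun w => Matrix.vecMul w (A ^ a)⁻¹) h2
      simpa [Matrix.vecMul_vecMul, Matrix.mul_assoc, Matrix.mul_nonsing_inv _ hAa,
        Matrix.vecMul_one] using this
    exact no_period A hev k hk (b - a) (by omega) h3
  intro a b hab
  by_contra hne
  rcases lt_or_gt_of_ne hne with h | h
  · exact key a b h hab
  · exact key b a h hab.symm


end ToralAux

open ToralAux

/-- Let `A` be an `n × n` integer matrix (`n ≥ 1`) with determinant `±1`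
none of whose complex eigenvalues is a root of unity, and let `T` be the induced
automorphism of the torus `ℝⁿ/ℤⁿ` (preserving the Haar probability measure `volume`).
If `c ∈ ℂ` has `|c| = 1`, `c ≠ 1`, and `g ∈ L²` satisfies `g (T x) = c * g x` for a.e. `x`,
then `g = 0` almost everywhere. -/
theorem toral_automorphism_eigenfunction_eq_zero
    (n : ℕ) (hn : 1 ≤ n) (A : Matrix (Fin n) (Fin n) ℤ)
    (hdet : A.det = 1 ∨ A.det = -1)
    (hev : ∀ z : ℂ, (Matrix.charpoly (A.map (Int.cast : ℤ → ℂ))).IsRoot z →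
      ∀ k : ℕ, k ≠ 0 → z ^ k ≠ 1)
    (c : ℂ) (hc : ‖c‖ = 1) (hc1 : c ≠ 1)
    (g : (Fin n → AddCircle (1 : ℝ)) → ℂ)
    (hg : MemLp g 2 volume)
    (heq : ∀ᵐ x ∂volume, g (fun i => ∑ j, A i j • x j) = c * g x) :
    g =ᵐ[volume] 0 := by
  classical
  have hA : IsUnit A.det := by
    rw [Int.isUnit_iff]; exact hdet
  have hpres := Tmap_measurePreserving (n := n) A hA
  set G := hg.toLp g with hGdef
  set φ : (Fin n → ℤ) → ℂ := fun k => inner (𝕜 := ℂ) (eLp k) G with hφdef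
  have hφ : ∀ k, φ k = ∫ x, (starRingEnd ℂ) (eChar n k x) * g x ∂volume := by
    intro k
    rw [hφdef]
    simp only
    rw [MeasureTheory.L2.inner_def]
    refine integral_congr_ae ?_
    have h1' : (eLp (n := n) k : X n → ℂ) =ᵐ[volume] eChar n k :=
      ContinuousMap.coeFn_toLp _ _
    have h2' : (G : X n → ℂ) =ᵐ[volume] g := hg.coeFn_toLp
    filter_upwards [h1', h2'] with x h1 h2
    rw [RCLike.inner_apply', h1, h2]
  have hrec : ∀ k, φ k = c * φ (Matrix.vecMul k A) := by
    intro k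
    rw [hφ k, hφ _]
    have hm : AEStronglyMeasurable (fun x => (starRingEnd ℂ) (eChar n k x) * g x)
        (volume : Measure (X n)) :=
      ((Complex.continuous_conj.comp (eChar n k).continuous).aestronglyMeasurable).mul
        hg.aestronglyMeasurable
    calc ∫ x, (starRingEnd ℂ) (eChar n k x) * g x ∂volume
        = ∫ x, (starRingEnd ℂ) (eChar n k x) * g x
            ∂((volume : Measure (X n)).map (Tmap n A)) := by rw [hpres.map_eq]
      _ = ∫ x, (starRingEnd ℂ) (eChar n k (Tmap n A x)) * g (Tmap n A x) ∂volume := by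
          rw [integral_map hpres.measurable.aemeasurable (by rwa [hpres.map_eq])]
      _ = ∫ x, (starRingEnd ℂ) (eChar n k (Tmap n A x)) * (c * g x) ∂volume := by
          refine integral_congr_ae ?_
          filter_upwards [heq] with x hx
          rw [show g (Tmap n A x) = c * g x from hx]
      _ = c * ∫ x, (starRingEnd ℂ) (eChar n (Matrix.vecMul k A) x) * g x ∂volume := by
          rw [← integral_const_mul]
          congr 1
          funext x
          rw [eChar_comp]
          ring
  have hnorm : ∀ k (m : ℕ), ‖φ (Matrix.vecMul k (A ^ m))‖ = ‖φ k‖ := by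
    intro k m
    induction m with
    | zero => rw [pow_zero, Matrix.vecMul_one]
    | succ m ih =>
        rw [← ih, pow_succ, ← Matrix.vecMul_vecMul]
        have := hrec (Matrix.vecMul k (A ^ m))
        rw [this, norm_mul]
        have : ‖c‖ = 1 := hc
        rw [this, one_mul]
  have hzero : ∀ k, k ≠ 0 → φ k = 0 := by
    intro k hk
    by_contra hne
    have hpos : 0 < ‖φ k‖ ^ 2 := pow_pos (norm_pos_iff.mpr hne) 2
    obtain ⟨N, hN⟩ := exists_nat_gt (‖G‖ ^ 2 / ‖φ k‖ ^ 2)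
    have hinj := orbit_injective A hA hev k hk
    have hb := orthonormal_eLp (n := n).sum_inner_products_le
      (s := (Finset.range N).image fun m => Matrix.vecMul k (A ^ m)) G
    have hle : (N : ℝ) * ‖φ k‖ ^ 2 ≤ ‖G‖ ^ 2 := by
      calc (N : ℝ) * ‖φ k‖ ^ 2
          = ∑ l ∈ (Finset.range N).image (fun m => Matrix.vecMul k (A ^ m)), ‖φ l‖ ^ 2 := by
            rw [Finset.sum_image fun a _ b _ hab => hinj hab]
            simp [hnorm k, Finset.sum_const, mul_comm]
        _ ≤ ‖G‖ ^ 2 := hb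
    have : (N : ℝ) ≤ ‖G‖ ^ 2 / ‖φ k‖ ^ 2 := (le_div_iff₀ hpos).mpr hle
    linarith
  have hzero0 : φ 0 = 0 := by
    have h0 := hrec 0
    rw [Matrix.zero_vecMul] at h0
    have : (1 - c) * φ 0 = 0 := by linear_combination h0
    rcases mul_eq_zero.mp this with h | h
    · exact absurd (by linear_combination -h) hc1
    · exact h
  have hG0 : G = 0 := by
    refine eq_zero_of_orthogonal_eLp G fun k => ?_
    rcases eq_or_ne k 0 with rfl | hk
    · exact hzero0
    · exact hzero k hk
  have : hg.toLp g = MemLp.toLp 0 (MemLp.zero : MemLp (0 : X n → ℂ) 2 volume) := by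
    rw [MemLp.toLp_zero]; exact hG0
  exact (MemLp.toLp_eq_toLp_iff hg (MemLp.zero : MemLp (0 : X n → ℂ) 2 volume)).mp this
end
end
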